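/- Let t ≥ 2 and let H be a 3-uniform hypergraph on n vertices containing no trace of K_{2,t}. Let A be the set of edges of H that contain at least one pair of vertices with co-degree exactly 1 in H. Then for every pair of distinct vertices {x,y}, the number of edges of H \ A containing both x and y is at most 3t − 3. -/

import Mathlib

open Finset

/-- The co-degree of `x` and `y` in `H`: the number of edges containing both. -/
def codeg {V : Type*} [DecidableEq V] (H : Finset (Finset V)) (x y : V) : ℕ :=
  (H.filter fun e => x ∈ e ∧ y ∈ e).card

/-- A 3-uniform hypergraph `H` contains `K_{2,t}` as a trace. -/
def ContainsTraceK2t {V : Type*} [DecidableEq V] (H : Finset (Finset V)) (t : ℕ) : Prop :=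
  ∃ (x y : V) (D : Finset V) (f g : V → Finset V), x ≠ y ∧ x ∉ D ∧ y ∉ D ∧ D.card = t ∧
    ∀ u ∈ D, f u ∈ H ∧ g u ∈ H ∧
      f u ∩ (insert x (insert y D)) = {x, u} ∧
      g u ∩ (insert x (insert y D)) = {y, u}

namespace Stmt6Aux

variable {V : Type*} [DecidableEq V]

/-- Feasibility of a vertex `u` for the greedy selection: there are two "slots"
`s₁ s₂` containing all pendants of `u` and hitting witnesses for `u`. -/
def Feas (Z : Finset V) (Wx Wy : V → Finset V) (u : V) : Prop :=
  ∃ s₁ s₂ : V,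
    (∀ z ∈ Z, (Wx z = {u} ∨ Wy z = {u}) → z = s₁ ∨ z = s₂) ∧
    (∃ w ∈ Wx u, w ∉ Z ∨ w = s₁ ∨ w = s₂) ∧
    (∃ w ∈ Wy u, w ∉ Z ∨ w = s₁ ∨ w = s₂)

lemma feas_swap {Z : Finset V} {Wx Wy : V → Finset V} {u : V}
    (h : Feas Z Wx Wy u) : Feas Z Wy Wx u := by
  obtain ⟨s₁, s₂, hp, h1, h2⟩ := h
  exact ⟨s₁, s₂, fun z hz hc => hp z hz hc.symm, h2, h1⟩

/-- Every infeasible `a`-pendant has at least two `b`-pendants pointing at it. -/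
lemma pend_two (Z : Finset V) (Wa Wb : V → Finset V)
    (hb1 : ∀ z ∈ Z, (Wb z).Nonempty)
    (ha3 : ∀ z ∈ Z, ∀ w ∈ Z, w ∈ Wa z → z ∈ Wa w)
    (hb3 : ∀ z ∈ Z, ∀ w ∈ Z, w ∈ Wb z → z ∈ Wb w)
    (hinf : ∀ u ∈ Z, ¬ Feas Z Wa Wb u)
    (z : V) (hz : z ∈ Z) (d : V) (hzd : Wa z = {d}) :
    2 ≤ (Z.filter fun q => Wb q = {z}).card := by
  by_contra hlt
  push_neg at hlt
  have hle1 : (Z.filter fun q => Wb q = {z}).card ≤ 1 := by omega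
  have hpendA : ∀ z' ∈ Z, Wa z' = {z} → z' = d := by
    intro z' hz' h
    have h1 : z ∈ Wa z' := by rw [h]; exact mem_singleton_self z
    have h2 := ha3 z' hz' z hz h1
    rw [hzd, mem_singleton] at h2
    exact h2
  rcases (Z.filter fun q => Wb q = {z}).eq_empty_or_nonempty with hTe | ⟨q, hq⟩
  · obtain ⟨w₂, hw₂⟩ := hb1 z hz
    refine hinf z hz ⟨d, w₂, ?_,
      ⟨d, by rw [hzd]; exact mem_singleton_self d, Or.inr (Or.inl rfl)⟩,
      ⟨w₂, hw₂, Or.inr (Or.inr rfl)⟩⟩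
    intro z' hz' hc
    rcases hc with h | h
    · exact Or.inl (hpendA z' hz' h)
    · have hzm : z' ∈ Z.filter (fun q => Wb q = {z}) := mem_filter.mpr ⟨hz', h⟩
      rw [hTe] at hzm
      exact absurd hzm (notMem_empty z')
  · have hqZ : q ∈ Z := (mem_filter.mp hq).1
    have hqW : Wb q = {z} := (mem_filter.mp hq).2
    have hqWz : q ∈ Wb z := by
      refine hb3 q hqZ z hz ?_
      rw [hqW]; exact mem_singleton_self z
    refine hinf z hz ⟨d, q, ?_,
      ⟨d, by rw [hzd]; exact mem_singleton_self d, Or.inr (Or.inl rfl)⟩,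
      ⟨q, hqWz, Or.inr (Or.inr rfl)⟩⟩
    intro z' hz' hc
    rcases hc with h | h
    · exact Or.inl (hpendA z' hz' h)
    · exact Or.inr (card_le_one.mp hle1 _ (mem_filter.mpr ⟨hz', h⟩) _ hq)

lemma count_aux (Z S : Finset V) (W : V → Finset V) (hS : S ⊆ Z)
    (h2 : ∀ z ∈ S, 2 ≤ (Z.filter fun q => W q = {z}).card) :
    2 * S.card ≤ (Z.filter fun q => ∃ d ∈ Z, W q = {d}).card := by
  have hdisj : ∀ z₁ ∈ S, ∀ z₂ ∈ S, z₁ ≠ z₂ →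
      Disjoint (Z.filter fun q => W q = {z₁}) (Z.filter fun q => W q = {z₂}) := by
    intro z₁ _ z₂ _ hne
    rw [disjoint_left]
    intro q h1 h2'
    have e1 := (mem_filter.mp h1).2
    have e2 := (mem_filter.mp h2').2
    apply hne
    have h : ({z₁} : Finset V) = {z₂} := by rw [← e1, e2]
    simpa using h
  have hsub : S.biUnion (fun z => Z.filter fun q => W q = {z}) ⊆
      Z.filter fun q => ∃ d ∈ Z, W q = {d} := by
    intro q hq
    obtain ⟨z, hzS, hqf⟩ := mem_biUnion.mp hq
    exact mem_filter.mpr ⟨(mem_filter.mp hqf).1, z, hS hzS, (mem_filter.mp hqf).2⟩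
  calc 2 * S.card = ∑ _z ∈ S, 2 := by rw [sum_const, smul_eq_mul, mul_comm]
    _ ≤ ∑ z ∈ S, (Z.filter fun q => W q = {z}).card := sum_le_sum h2
    _ = (S.biUnion fun z => Z.filter fun q => W q = {z}).card := (card_biUnion hdisj).symm
    _ ≤ _ := card_le_card hsub

lemma exists_feasible (Z : Finset V) (Wx Wy : V → Finset V)
    (hx1 : ∀ z ∈ Z, (Wx z).Nonempty) (hy1 : ∀ z ∈ Z, (Wy z).Nonempty)
    (hx3 : ∀ z ∈ Z, ∀ w ∈ Z, w ∈ Wx z → z ∈ Wx w)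
    (hy3 : ∀ z ∈ Z, ∀ w ∈ Z, w ∈ Wy z → z ∈ Wy w)
    (hne : Z.Nonempty) :
    ∃ u ∈ Z, Feas Z Wx Wy u := by
  by_contra hcon
  push_neg at hcon
  have hcon' : ∀ u ∈ Z, ¬ Feas Z Wy Wx u := fun u hu hf => hcon u hu (feas_swap hf)
  have h2x : ∀ z ∈ Z.filter (fun z => ∃ d ∈ Z, Wx z = {d}),
      2 ≤ (Z.filter fun q => Wy q = {z}).card := by
    intro z hzx
    obtain ⟨hzZ, d, hd, heq⟩ := mem_filter.mp hzx
    exact pend_two Z Wx Wy hy1 hx3 hy3 hcon z hzZ d heq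
  have h2y : ∀ z ∈ Z.filter (fun z => ∃ d ∈ Z, Wy z = {d}),
      2 ≤ (Z.filter fun q => Wx q = {z}).card := by
    intro z hzy
    obtain ⟨hzZ, d, hd, heq⟩ := mem_filter.mp hzy
    exact pend_two Z Wy Wx hx1 hy3 hx3 hcon' z hzZ d heq
  have c1 := count_aux Z (Z.filter (fun z => ∃ d ∈ Z, Wx z = {d})) Wy (filter_subset _ _) h2x
  have c2 := count_aux Z (Z.filter (fun z => ∃ d ∈ Z, Wy z = {d})) Wx (filter_subset _ _) h2y
  have hx0 : (Z.filter (fun z => ∃ d ∈ Z, Wx z = {d})).card = 0 := by omega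
  have hy0 : (Z.filter (fun z => ∃ d ∈ Z, Wy z = {d})).card = 0 := by omega
  rw [card_eq_zero] at hx0 hy0
  obtain ⟨u, hu⟩ := hne
  apply hcon u hu
  obtain ⟨w₁, hw₁⟩ := hx1 u hu
  obtain ⟨w₂, hw₂⟩ := hy1 u hu
  refine ⟨w₁, w₂, ?_, ⟨w₁, hw₁, Or.inr (Or.inl rfl)⟩, ⟨w₂, hw₂, Or.inr (Or.inr rfl)⟩⟩
  intro z hz hc
  exfalso
  rcases hc with h | h
  · have : z ∈ Z.filter (fun z => ∃ d ∈ Z, Wx z = {d}) := mem_filter.mpr ⟨hz, u, hu, h⟩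
    rw [hx0] at this
    exact notMem_empty z this
  · have : z ∈ Z.filter (fun z => ∃ d ∈ Z, Wy z = {d}) := mem_filter.mpr ⟨hz, u, hu, h⟩
    rw [hy0] at this
    exact notMem_empty z this

/-- The key selection lemma. -/
lemma sel (t : ℕ) : ∀ (Z : Finset V) (Wx Wy : V → Finset V),
    (∀ z ∈ Z, (Wx z).Nonempty) → (∀ z ∈ Z, (Wy z).Nonempty) →
    (∀ z ∈ Z, z ∉ Wx z) → (∀ z ∈ Z, z ∉ Wy z) →
    (∀ z ∈ Z, ∀ w ∈ Z, w ∈ Wx z → z ∈ Wx w) →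
    (∀ z ∈ Z, ∀ w ∈ Z, w ∈ Wy z → z ∈ Wy w) →
    3 * t ≤ Z.card + 2 →
    ∃ D, D ⊆ Z ∧ D.card = t ∧ ∀ u ∈ D, ¬ Wx u ⊆ D ∧ ¬ Wy u ⊆ D := by
  induction t with
  | zero =>
    intro Z Wx Wy _ _ _ _ _ _ _
    exact ⟨∅, empty_subset _, card_empty, by simp⟩
  | succ t ih =>
    intro Z Wx Wy hx1 hy1 hx2 hy2 hx3 hy3 hcard
    have hne : Z.Nonempty := card_pos.mp (by omega)
    obtain ⟨u, hu, s₁, s₂, hpend, ⟨wx, hwx, hwxs⟩, ⟨wy, hwy, hwys⟩⟩ :=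
      exists_feasible Z Wx Wy hx1 hy1 hx3 hy3 hne
    set Z' := Z \ {u, s₁, s₂} with hZ'
    have hZ'sub : Z' ⊆ Z := sdiff_subset
    have hZ'mem : ∀ z, z ∈ Z' ↔ z ∈ Z ∧ ¬(z = u ∨ z = s₁ ∨ z = s₂) := by
      intro z; rw [hZ', mem_sdiff]; simp
    have hcard3 : Z.card ≤ Z'.card + 3 := by
      have h1 := card_le_card_sdiff_add_card (s := Z) (t := ({u, s₁, s₂} : Finset V))
      rw [← hZ'] at h1
      have h2 : ({u, s₁, s₂} : Finset V).card ≤ 3 := by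
        apply le_trans (card_insert_le _ _)
        have := card_insert_le s₂ ({s₂} : Finset V)
        have h3 : ({s₁, s₂} : Finset V).card ≤ 2 := by
          apply le_trans (card_insert_le _ _); simp
        omega
      omega
    -- nonemptiness after erasing u
    have hx1' : ∀ z ∈ Z', ((Wx z).erase u).Nonempty := by
      intro z hz
      by_contra h
      rw [not_nonempty_iff_eq_empty] at h
      have hall : ∀ w ∈ Wx z, w = u := by
        intro w hw
        by_contra hne'
        have : w ∈ (Wx z).erase u := mem_erase.mpr ⟨hne', hw⟩
        rw [h] at this
        exact notMem_empty w this
      obtain ⟨w0, hw0⟩ := hx1 z (hZ'sub hz)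
      have hu0 : u ∈ Wx z := (hall w0 hw0) ▸ hw0
      have hsing : Wx z = {u} := eq_singleton_iff_unique_mem.mpr ⟨hu0, hall⟩
      have hzs := hpend z (hZ'sub hz) (Or.inl hsing)
      exact ((hZ'mem z).mp hz).2 (Or.inr hzs)
    have hy1' : ∀ z ∈ Z', ((Wy z).erase u).Nonempty := by
      intro z hz
      by_contra h
      rw [not_nonempty_iff_eq_empty] at h
      have hall : ∀ w ∈ Wy z, w = u := by
        intro w hw
        by_contra hne'
        have : w ∈ (Wy z).erase u := mem_erase.mpr ⟨hne', hw⟩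
        rw [h] at this
        exact notMem_empty w this
      obtain ⟨w0, hw0⟩ := hy1 z (hZ'sub hz)
      have hu0 : u ∈ Wy z := (hall w0 hw0) ▸ hw0
      have hsing : Wy z = {u} := eq_singleton_iff_unique_mem.mpr ⟨hu0, hall⟩
      have hzs := hpend z (hZ'sub hz) (Or.inr hsing)
      exact ((hZ'mem z).mp hz).2 (Or.inr hzs)
    obtain ⟨D', hD'Z, hD'c, hD'⟩ := ih Z' (fun z => (Wx z).erase u) (fun z => (Wy z).erase u)
      hx1' hy1'
      (fun z hz h => hx2 z (hZ'sub hz) (mem_erase.mp h).2)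
      (fun z hz h => hy2 z (hZ'sub hz) (mem_erase.mp h).2)
      (fun z hz w hw h => mem_erase.mpr
        ⟨fun hzu => ((hZ'mem z).mp hz).2 (Or.inl hzu),
         hx3 z (hZ'sub hz) w (hZ'sub hw) (mem_erase.mp h).2⟩)
      (fun z hz w hw h => mem_erase.mpr
        ⟨fun hzu => ((hZ'mem z).mp hz).2 (Or.inl hzu),
         hy3 z (hZ'sub hz) w (hZ'sub hw) (mem_erase.mp h).2⟩)
      (by omega)
    have huD' : u ∉ D' := fun h => ((hZ'mem u).mp (hD'Z h)).2 (Or.inl rfl)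
    refine ⟨insert u D', insert_subset hu (hD'Z.trans hZ'sub),
      by rw [card_insert_of_notMem huD', hD'c], ?_⟩
    intro v hv
    rcases mem_insert.mp hv with heqv | hv'
    · subst heqv
      constructor
      · intro hsub
        rcases mem_insert.mp (hsub hwx) with heq | hwD'
        · exact hx2 v hu (heq ▸ hwx)
        · have hmem := (hZ'mem wx).mp (hD'Z hwD')
          rcases hwxs with h | h | h
          · exact h hmem.1
          · exact hmem.2 (Or.inr (Or.inl h))
          · exact hmem.2 (Or.inr (Or.inr h))
      · intro hsub
        rcases mem_insert.mp (hsub hwy) with heq | hwD'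
        · exact hy2 v hu (heq ▸ hwy)
        · have hmem := (hZ'mem wy).mp (hD'Z hwD')
          rcases hwys with h | h | h
          · exact h hmem.1
          · exact hmem.2 (Or.inr (Or.inl h))
          · exact hmem.2 (Or.inr (Or.inr h))
    · obtain ⟨hvx, hvy⟩ := hD' v hv'
      constructor
      · intro hsub
        obtain ⟨w, hw, hwn⟩ := not_subset.mp hvx
        have hw' := mem_erase.mp hw
        rcases mem_insert.mp (hsub hw'.2) with heq | hmem
        · exact hw'.1 heq
        · exact hwn hmem
      · intro hsub
        obtain ⟨w, hw, hwn⟩ := not_subset.mp hvy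
        have hw' := mem_erase.mp hw
        rcases mem_insert.mp (hsub hw'.2) with heq | hmem
        · exact hw'.1 heq
        · exact hwn hmem

/-- witness sets: third vertices of edges through `x, z` avoiding `y`. -/
def Wside (H : Finset (Finset V)) (x y : V) (z : V) : Finset V :=
  (H.filter fun f => x ∈ f ∧ z ∈ f ∧ y ∉ f).biUnion fun f => f \ {x, z}

lemma mem_Wside {H : Finset (Finset V)} {x y z w : V} :
    w ∈ Wside H x y z ↔ ∃ f, f ∈ H ∧ x ∈ f ∧ z ∈ f ∧ y ∉ f ∧ w ∈ f ∧ w ≠ x ∧ w ≠ z := by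
  simp only [Wside, mem_biUnion, mem_filter, mem_sdiff, mem_insert, mem_singleton, not_or]
  constructor
  · rintro ⟨f, ⟨hf, hx, hz, hy⟩, hwf, hw1, hw2⟩
    exact ⟨f, hf, hx, hz, hy, hwf, hw1, hw2⟩
  · rintro ⟨f, hf, hx, hz, hy, hwf, hw1, hw2⟩
    exact ⟨f, ⟨hf, hx, hz, hy⟩, hwf, hw1, hw2⟩

end Stmt6Aux

/-- Let `t ≥ 2` and `H` a 3-uniform hypergraph with no `K_{2,t}` trace.  If `A`
is the set of edges of `H` containing a pair of co-degree exactly 1, then every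
pair of distinct vertices lies in at most `3t - 3` edges of `H \ A`. -/
theorem stmt6 {V : Type*} [DecidableEq V] (t : ℕ) (ht : 2 ≤ t)
    (H : Finset (Finset V)) (h3 : ∀ e ∈ H, e.card = 3)
    (hfree : ¬ ContainsTraceK2t H t)
    (A : Finset (Finset V))
    (hA : ∀ e, e ∈ A ↔ e ∈ H ∧ ∃ a ∈ e, ∃ b ∈ e, a ≠ b ∧ codeg H a b = 1)
    (x y : V) (hxy : x ≠ y) :
    ((H \ A).filter fun e => x ∈ e ∧ y ∈ e).card ≤ 3 * t - 3 := by
  classical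
  by_contra hgoal
  push_neg at hgoal
  set P := (H \ A).filter (fun e => x ∈ e ∧ y ∈ e) with hP
  have hPmem : ∀ e ∈ P, e ∈ H ∧ e ∉ A ∧ x ∈ e ∧ y ∈ e := by
    intro e he
    have h1 := mem_filter.mp he
    have h2 := mem_sdiff.mp h1.1
    exact ⟨h2.1, h2.2, h1.2.1, h1.2.2⟩
  have hP3 : ∀ e ∈ P, e.card = 3 := fun e he => h3 e (hPmem e he).1
  have hset3 : ∀ z : V, z ≠ x → z ≠ y → ({x, y, z} : Finset V).card = 3 := by
    intro z hzx hzy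
    rw [card_insert_of_notMem (by simp [hxy, Ne.symm hzx]),
      card_insert_of_notMem (by simp [Ne.symm hzy]), card_singleton]
  have huniq : ∀ z, z ≠ x → z ≠ y → ∀ g ∈ H, x ∈ g → y ∈ g → z ∈ g →
      g = ({x, y, z} : Finset V) := by
    intro z hzx hzy g hg hxg hyg hzg
    refine (eq_of_subset_of_card_le ?_ ?_).symm
    · intro a ha
      simp only [mem_insert, mem_singleton] at ha
      rcases ha with rfl | rfl | rfl
      exacts [hxg, hyg, hzg]
    · rw [h3 g hg, hset3 z hzx hzy]
  set Z := P.biUnion (fun e => e \ {x, y}) with hZdef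
  have hZmem : ∀ z ∈ Z, z ≠ x ∧ z ≠ y ∧ ({x, y, z} : Finset V) ∈ P := by
    intro z hz
    obtain ⟨e, heP, hze⟩ := mem_biUnion.mp hz
    have h1 := mem_sdiff.mp hze
    have hzx : z ≠ x := by intro h; exact h1.2 (by simp [h])
    have hzy : z ≠ y := by intro h; exact h1.2 (by simp [h])
    obtain ⟨heH, heA, hxe, hye⟩ := hPmem e heP
    have he : e = {x, y, z} := huniq z hzx hzy e heH hxe hye h1.1
    exact ⟨hzx, hzy, he ▸ heP⟩
  have hdisj : ∀ e₁ ∈ P, ∀ e₂ ∈ P, e₁ ≠ e₂ → Disjoint (e₁ \ {x, y}) (e₂ \ {x, y}) := by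
    intro e₁ h1 e₂ h2 hne
    rw [disjoint_left]
    intro z hz1 hz2
    have m1 := mem_sdiff.mp hz1
    have m2 := mem_sdiff.mp hz2
    have hzx : z ≠ x := fun h => m1.2 (by simp [h])
    have hzy : z ≠ y := fun h => m1.2 (by simp [h])
    obtain ⟨hH1, _, hx1, hy1⟩ := hPmem e₁ h1
    obtain ⟨hH2, _, hx2, hy2⟩ := hPmem e₂ h2
    exact hne ((huniq z hzx hzy e₁ hH1 hx1 hy1 m1.1).trans
      (huniq z hzx hzy e₂ hH2 hx2 hy2 m2.1).symm)
  have hcard1 : ∀ e ∈ P, (e \ {x, y}).card = 1 := by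
    intro e he
    obtain ⟨_, _, hxe, hye⟩ := hPmem e he
    have hsub : ({x, y} : Finset V) ⊆ e := by
      intro a ha
      simp only [mem_insert, mem_singleton] at ha
      rcases ha with rfl | rfl
      exacts [hxe, hye]
    rw [card_sdiff_of_subset hsub, hP3 e he, card_insert_of_notMem (by simp [hxy]), card_singleton]
  have hZcard : Z.card = P.card := by
    rw [hZdef, card_biUnion hdisj, Finset.sum_congr rfl hcard1, sum_const, smul_eq_mul, mul_one]
  set Wx := Stmt6Aux.Wside H x y with hWx
  set Wy := Stmt6Aux.Wside H y x with hWy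
  -- nonemptiness of witness sets
  have hx1 : ∀ z ∈ Z, (Wx z).Nonempty := by
    intro z hz
    obtain ⟨hzx, hzy, heP⟩ := hZmem z hz
    obtain ⟨heH, heA, _, _⟩ := hPmem _ heP
    have heA' : ¬ (({x, y, z} : Finset V) ∈ H ∧
        ∃ a ∈ ({x, y, z} : Finset V), ∃ b ∈ ({x, y, z} : Finset V), a ≠ b ∧ codeg H a b = 1) :=
      fun hc => heA ((hA _).mpr hc)
    have hxz : codeg H x z ≠ 1 := by
      intro h1
      exact heA' ⟨heH, x, by simp, z, by simp, Ne.symm hzx, h1⟩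
    have hein : ({x, y, z} : Finset V) ∈ H.filter fun f => x ∈ f ∧ z ∈ f :=
      mem_filter.mpr ⟨heH, by simp, by simp⟩
    have h1lt : 1 < (H.filter fun f => x ∈ f ∧ z ∈ f).card := by
      have hpos : 0 < (H.filter fun f => x ∈ f ∧ z ∈ f).card := card_pos.mpr ⟨_, hein⟩
      have hco : codeg H x z = (H.filter fun f => x ∈ f ∧ z ∈ f).card := rfl
      omega
    obtain ⟨f, hfmem, hfne⟩ := exists_mem_ne h1lt ({x, y, z} : Finset V)
    have hfH : f ∈ H := (mem_filter.mp hfmem).1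
    have hxf : x ∈ f := (mem_filter.mp hfmem).2.1
    have hzf : z ∈ f := (mem_filter.mp hfmem).2.2
    have hyf : y ∉ f := by
      intro hyf
      exact hfne (huniq z hzx hzy f hfH hxf hyf hzf)
    have hsub : ({x, z} : Finset V) ⊆ f := by
      intro a ha
      simp only [mem_insert, mem_singleton] at ha
      rcases ha with rfl | rfl
      exacts [hxf, hzf]
    have hone : (f \ {x, z}).Nonempty := by
      rw [← card_pos, card_sdiff_of_subset hsub, h3 f hfH,
        card_insert_of_notMem (by simp [Ne.symm hzx]), card_singleton]
      norm_num
    obtain ⟨w, hw⟩ := hone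
    have hw' := mem_sdiff.mp hw
    have hwx : w ≠ x := fun h => hw'.2 (by simp [h])
    have hwz : w ≠ z := fun h => hw'.2 (by simp [h])
    exact ⟨w, Stmt6Aux.mem_Wside.mpr ⟨f, hfH, hxf, hzf, hyf, hw'.1, hwx, hwz⟩⟩
  have hy1 : ∀ z ∈ Z, (Wy z).Nonempty := by
    intro z hz
    obtain ⟨hzx, hzy, heP⟩ := hZmem z hz
    obtain ⟨heH, heA, _, _⟩ := hPmem _ heP
    have heA' : ¬ (({x, y, z} : Finset V) ∈ H ∧
        ∃ a ∈ ({x, y, z} : Finset V), ∃ b ∈ ({x, y, z} : Finset V), a ≠ b ∧ codeg H a b = 1) :=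
      fun hc => heA ((hA _).mpr hc)
    have hyz : codeg H y z ≠ 1 := by
      intro h1
      exact heA' ⟨heH, y, by simp, z, by simp, Ne.symm hzy, h1⟩
    have hein : ({x, y, z} : Finset V) ∈ H.filter fun f => y ∈ f ∧ z ∈ f :=
      mem_filter.mpr ⟨heH, by simp, by simp⟩
    have h1lt : 1 < (H.filter fun f => y ∈ f ∧ z ∈ f).card := by
      have hpos : 0 < (H.filter fun f => y ∈ f ∧ z ∈ f).card := card_pos.mpr ⟨_, hein⟩
      have hco : codeg H y z = (H.filter fun f => y ∈ f ∧ z ∈ f).card := rfl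
      omega
    obtain ⟨f, hfmem, hfne⟩ := exists_mem_ne h1lt ({x, y, z} : Finset V)
    have hfH : f ∈ H := (mem_filter.mp hfmem).1
    have hyf : y ∈ f := (mem_filter.mp hfmem).2.1
    have hzf : z ∈ f := (mem_filter.mp hfmem).2.2
    have hxf : x ∉ f := by
      intro hxf
      exact hfne (huniq z hzx hzy f hfH hxf hyf hzf)
    have hsub : ({y, z} : Finset V) ⊆ f := by
      intro a ha
      simp only [mem_insert, mem_singleton] at ha
      rcases ha with rfl | rfl
      exacts [hyf, hzf]
    have hone : (f \ {y, z}).Nonempty := by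
      rw [← card_pos, card_sdiff_of_subset hsub, h3 f hfH,
        card_insert_of_notMem (by simp [Ne.symm hzy]), card_singleton]
      norm_num
    obtain ⟨w, hw⟩ := hone
    have hw' := mem_sdiff.mp hw
    have hwy : w ≠ y := fun h => hw'.2 (by simp [h])
    have hwz : w ≠ z := fun h => hw'.2 (by simp [h])
    exact ⟨w, Stmt6Aux.mem_Wside.mpr ⟨f, hfH, hyf, hzf, hxf, hw'.1, hwy, hwz⟩⟩
  have hx2 : ∀ z ∈ Z, z ∉ Wx z := by
    intro z _ h
    obtain ⟨f, _, _, _, _, _, _, hzz⟩ := Stmt6Aux.mem_Wside.mp h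
    exact hzz rfl
  have hy2 : ∀ z ∈ Z, z ∉ Wy z := by
    intro z _ h
    obtain ⟨f, _, _, _, _, _, _, hzz⟩ := Stmt6Aux.mem_Wside.mp h
    exact hzz rfl
  have hx3 : ∀ z ∈ Z, ∀ w ∈ Z, w ∈ Wx z → z ∈ Wx w := by
    intro z hz w hw hmem
    obtain ⟨f, hfH, hxf, hzf, hyf, hwf, hwx, hwz⟩ := Stmt6Aux.mem_Wside.mp hmem
    exact Stmt6Aux.mem_Wside.mpr ⟨f, hfH, hxf, hwf, hyf, hzf, (hZmem z hz).1, Ne.symm hwz⟩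
  have hy3 : ∀ z ∈ Z, ∀ w ∈ Z, w ∈ Wy z → z ∈ Wy w := by
    intro z hz w hw hmem
    obtain ⟨f, hfH, hyf, hzf, hxf, hwf, hwy, hwz⟩ := Stmt6Aux.mem_Wside.mp hmem
    exact Stmt6Aux.mem_Wside.mpr ⟨f, hfH, hyf, hwf, hxf, hzf, (hZmem z hz).2.1, Ne.symm hwz⟩
  have hZbig : 3 * t ≤ Z.card + 2 := by
    rw [hZcard]
    omega
  obtain ⟨D, hDZ, hDcard, hDgood⟩ := Stmt6Aux.sel t Z Wx Wy hx1 hy1 hx2 hy2 hx3 hy3 hZbig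
  have hmain : ∀ u ∈ D, ∃ p : Finset V × Finset V,
      p.1 ∈ H ∧ p.2 ∈ H ∧ p.1 ∩ (insert x (insert y D)) = {x, u} ∧
      p.2 ∩ (insert x (insert y D)) = {y, u} := by
    intro u hu
    obtain ⟨hux, huy, _⟩ := hZmem u (hDZ hu)
    obtain ⟨hnx, hny⟩ := hDgood u hu
    obtain ⟨wa, hwam, hwaD⟩ := not_subset.mp hnx
    obtain ⟨wb, hwbm, hwbD⟩ := not_subset.mp hny
    obtain ⟨f, hfH, hxf, huf, hyf, hwf, hwax, hwau⟩ := Stmt6Aux.mem_Wside.mp hwam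
    obtain ⟨g, hgH, hyg, hug, hxg, hwg, hwby, hwbu⟩ := Stmt6Aux.mem_Wside.mp hwbm
    have hway : wa ≠ y := fun h => hyf (h ▸ hwf)
    have hwbx : wb ≠ x := fun h => hxg (h ▸ hwg)
    have hfeq : f = {x, u, wa} := by
      refine (eq_of_subset_of_card_le ?_ ?_).symm
      · intro a ha
        simp only [mem_insert, mem_singleton] at ha
        rcases ha with rfl | rfl | rfl
        exacts [hxf, huf, hwf]
      · rw [h3 f hfH, card_insert_of_notMem (by simp [Ne.symm hux, Ne.symm hwax]),
          card_insert_of_notMem (by simp [Ne.symm hwau]), card_singleton]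
    have hgeq : g = {y, u, wb} := by
      refine (eq_of_subset_of_card_le ?_ ?_).symm
      · intro a ha
        simp only [mem_insert, mem_singleton] at ha
        rcases ha with rfl | rfl | rfl
        exacts [hyg, hug, hwg]
      · rw [h3 g hgH, card_insert_of_notMem (by simp [Ne.symm huy, Ne.symm hwby]),
          card_insert_of_notMem (by simp [Ne.symm hwbu]), card_singleton]
    have hinterf : f ∩ (insert x (insert y D)) = {x, u} := by
      rw [hfeq]
      ext a
      simp only [mem_inter, mem_insert, mem_singleton]
      constructor
      · rintro ⟨h1, h2⟩
        rcases h1 with rfl | rfl | rfl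
        · exact Or.inl rfl
        · exact Or.inr rfl
        · rcases h2 with h | h | h
          exacts [(hwax h).elim, (hway h).elim, (hwaD h).elim]
      · rintro (rfl | rfl)
        · exact ⟨Or.inl rfl, Or.inl rfl⟩
        · exact ⟨Or.inr (Or.inl rfl), Or.inr (Or.inr hu)⟩
    have hinterg : g ∩ (insert x (insert y D)) = {y, u} := by
      rw [hgeq]
      ext a
      simp only [mem_inter, mem_insert, mem_singleton]
      constructor
      · rintro ⟨h1, h2⟩
        rcases h1 with rfl | rfl | rfl
        · exact Or.inl rfl
        · exact Or.inr rfl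
        · rcases h2 with h | h | h
          exacts [(hwbx h).elim, (hwby h).elim, (hwbD h).elim]
      · rintro (rfl | rfl)
        · exact ⟨Or.inl rfl, Or.inr (Or.inl rfl)⟩
        · exact ⟨Or.inr (Or.inl rfl), Or.inr (Or.inr hu)⟩
    exact ⟨(f, g), hfH, hgH, hinterf, hinterg⟩
  apply hfree
  refine ⟨x, y, D, fun u => if h : u ∈ D then (Classical.choose (hmain u h)).1 else ∅,
    fun u => if h : u ∈ D then (Classical.choose (hmain u h)).2 else ∅, hxy, ?_, ?_, hDcard, ?_⟩
  · exact fun h => (hZmem x (hDZ h)).1 rfl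
  · exact fun h => (hZmem y (hDZ h)).2.1 rfl
  · intro u hu
    simp only [dif_pos hu]
    exact Classical.choose_spec (hmain u hu)
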